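/- arXiv:2604.20274 — 3 statements merged into one kernel-verified Lean document; each statement's English description precedes it below -/
import Mathlib

section
/- Define the per-node contribution t_v(d) = ln(d/(d_min - 0.5)) if d ≥ d_min and t_v(d) = 0 otherwise, for integer degrees d ≥ 0 and integer d_min ≥ 1. Then for any integer d ≥ 0, |t_v(d+1) - t_v(d)| ≤ ln((d_min+1)/d_min). -/
theorem stmt_3 (d_min : ℕ) (h : 1 ≤ d_min)
    (t : ℕ → ℝ)
    (ht : ∀ d : ℕ, t d = if d_min ≤ d then Real.log ((d : ℝ) / ((d_min : ℝ) - 0.5)) else 0)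
    (d : ℕ) :
    |t (d + 1) - t d| ≤ Real.log (((d_min : ℝ) + 1) / (d_min : ℝ)) := by
  have hm : (1:ℝ) ≤ (d_min:ℝ) := by exact_mod_cast h
  have hm0 : (0:ℝ) < (d_min:ℝ) := by linarith
  have hden : (0:ℝ) < (d_min:ℝ) - 0.5 := by norm_num; linarith
  have hlogpos : 0 ≤ Real.log (((d_min : ℝ) + 1) / (d_min : ℝ)) := by
    apply Real.log_nonneg
    rw [le_div_iff₀ hm0]; linarith
  rw [ht, ht]
  rcases lt_trichotomy (d+1) d_min with h1 | h1 | h1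
  · rw [if_neg (by omega), if_neg (by omega)]
    simpa using hlogpos
  · rw [if_pos (by omega), if_neg (by omega), sub_zero]
    have hd : ((d:ℝ) + 1) = (d_min : ℝ) := by exact_mod_cast congrArg (Nat.cast : ℕ → ℝ) h1
    push_cast
    rw [hd]
    have hratio1 : (1:ℝ) ≤ (d_min : ℝ) / ((d_min:ℝ) - 0.5) := by
      rw [le_div_iff₀ hden]; linarith
    rw [abs_of_nonneg (Real.log_nonneg hratio1)]
    apply Real.log_le_log (by positivity)
    rw [div_le_div_iff₀ hden hm0]
    nlinarith
  · have hd1 : d_min ≤ d := by omega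
    rw [if_pos (by omega), if_pos hd1]
    have hd0 : (0:ℝ) < (d:ℝ) := by
      have : (d_min:ℝ) ≤ (d:ℝ) := by exact_mod_cast hd1
      linarith
    have hdm : (d_min:ℝ) ≤ (d:ℝ) := by exact_mod_cast hd1
    push_cast
    rw [Real.log_div (by positivity) (by linarith), Real.log_div (by positivity) (by linarith)]
    have : Real.log ((d:ℝ)+1) - Real.log (d:ℝ) = Real.log (((d:ℝ)+1)/(d:ℝ)) := by
      rw [Real.log_div (by positivity) (by positivity)]
    rw [show Real.log ((d:ℝ)+1) - Real.log ((d_min:ℝ) - 0.5) - (Real.log (d:ℝ) - Real.log ((d_min:ℝ) - 0.5)) = Real.log ((d:ℝ)+1) - Real.log (d:ℝ) by ring, this]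
    rw [abs_of_nonneg (Real.log_nonneg (by rw [le_div_iff₀ hd0]; linarith))]
    apply Real.log_le_log (by positivity)
    rw [div_le_div_iff₀ hd0 hm0]
    nlinarith
end

section
/- Let t(d) = ln(d/(d_min - 0.5)) if d ≥ d_min, else 0, for integer d_min ≥ 1. For a finite family of integer degrees (d_v)_{v∈V}, define T_disc = Σ_v t(d_v). If (d'_v) differs from (d_v) in at most two indices, and at each of those indices the degree changes by exactly 1, then |Σ_v t(d_v) − Σ_v t(d'_v)| ≤ 2·ln((d_min+1)/d_min). -/
lemma aux_step (m : ℕ) (hm : 1 ≤ m) (t : ℕ → ℝ)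
    (ht : ∀ d : ℕ, t d = if m ≤ d then Real.log ((d : ℝ) / ((m : ℝ) - 0.5)) else 0)
    (a : ℕ) : |t (a + 1) - t a| ≤ Real.log (((m : ℝ) + 1) / m) := by
  have hm1 : (1 : ℝ) ≤ (m : ℝ) := by exact_mod_cast hm
  have hmpos : (0 : ℝ) < (m : ℝ) := by linarith
  have hc : (0 : ℝ) < (m : ℝ) - 0.5 := by norm_num; linarith
  have hLnn : 0 ≤ Real.log (((m : ℝ) + 1) / m) :=
    Real.log_nonneg ((one_le_div hmpos).2 (by linarith))
  rcases lt_trichotomy (a + 1) m with h1 | h1 | h1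
  · rw [ht, ht, if_neg (by omega), if_neg (by omega)]
    simpa using hLnn
  · have ha : ¬ m ≤ a := by omega
    rw [ht, ht, if_pos (by omega), if_neg ha]
    have hx : (1 : ℝ) ≤ ((a : ℝ) + 1) / ((m : ℝ) - 0.5) := by
      rw [le_div_iff₀ hc]
      have : (m : ℝ) = (a : ℝ) + 1 := by exact_mod_cast h1.symm
      linarith
    rw [sub_zero, abs_of_nonneg (Real.log_nonneg (by push_cast; exact hx))]
    apply Real.log_le_log (by positivity)
    rw [div_le_div_iff₀ hc hmpos]
    have : (m : ℝ) = (a : ℝ) + 1 := by exact_mod_cast h1.symm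
    push_cast
    nlinarith
  · have ha : m ≤ a := by omega
    have hapos : (0 : ℝ) < (a : ℝ) := by
      have : (m : ℝ) ≤ (a : ℝ) := by exact_mod_cast ha
      linarith
    have haR : (m : ℝ) ≤ (a : ℝ) := by exact_mod_cast ha
    rw [ht, ht, if_pos (by omega), if_pos ha]
    rw [Real.log_div (by push_cast; linarith) (ne_of_gt hc),
        Real.log_div (ne_of_gt hapos) (ne_of_gt hc)]
    have heq : Real.log ((a : ℝ) + 1) - Real.log ((m : ℝ) - 0.5) -
        (Real.log (a : ℝ) - Real.log ((m : ℝ) - 0.5)) =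
        Real.log (((a : ℝ) + 1) / a) := by
      rw [Real.log_div (by linarith) (ne_of_gt hapos)]; ring
    push_cast
    rw [heq, abs_of_nonneg (Real.log_nonneg ((one_le_div hapos).2 (by linarith)))]
    apply Real.log_le_log (by positivity)
    rw [div_le_div_iff₀ hapos hmpos]
    nlinarith

theorem stmt_4 {V : Type*} [Fintype V] (d_min : ℕ) (h : 1 ≤ d_min)
    (t : ℕ → ℝ)
    (ht : ∀ d : ℕ, t d = if d_min ≤ d then Real.log ((d : ℝ) / ((d_min : ℝ) - 0.5)) else 0)
    (d d' : V → ℕ) (S : Finset V) (hS : S.card ≤ 2)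
    (hout : ∀ v ∉ S, d v = d' v)
    (hin : ∀ v ∈ S, d' v = d v + 1 ∨ d v = d' v + 1) :
    |(∑ v : V, t (d v)) - ∑ v : V, t (d' v)| ≤
      2 * Real.log (((d_min : ℝ) + 1) / (d_min : ℝ)) := by
  set L := Real.log (((d_min : ℝ) + 1) / (d_min : ℝ)) with hL
  have hsum : (∑ v : V, t (d v)) - ∑ v : V, t (d' v) =
      ∑ v ∈ S, (t (d v) - t (d' v)) := by
    rw [← Finset.sum_sub_distrib]
    exact (Finset.sum_subset (Finset.subset_univ S)
      (fun v _ hv => by rw [hout v hv, sub_self])).symm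
  rw [hsum]
  calc |∑ v ∈ S, (t (d v) - t (d' v))| ≤ ∑ v ∈ S, |t (d v) - t (d' v)| :=
        Finset.abs_sum_le_sum_abs _ _
    _ ≤ ∑ v ∈ S, L := by
        apply Finset.sum_le_sum
        intro v hv
        rcases hin v hv with h1 | h1
        · rw [abs_sub_comm, h1]
          exact aux_step d_min h t ht (d v)
        · rw [h1]
          exact aux_step d_min h t ht (d' v)
    _ = S.card * L := by rw [Finset.sum_const, nsmul_eq_mul]
    _ ≤ 2 * L := by
        have hLnn : 0 ≤ L := by
          apply Real.log_nonneg
          rw [le_div_iff₀ (by exact_mod_cast h : (0:ℝ) < (d_min:ℝ))]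
          linarith [(by exact_mod_cast h : (1:ℝ) ≤ (d_min:ℝ))]
        have : (S.card : ℝ) ≤ 2 := by exact_mod_cast hS
        nlinarith
end

section
/- Let X be a real random variable with the Laplace distribution of scale b > 0 centered at 0, i.e., density (1/(2b))·exp(−|x|/b). For any real function f on databases with global sensitivity Δ (meaning |f(D) − f(D')| ≤ Δ for all neighboring D, D'), the mechanism M(D) = f(D) + X with b = Δ/ε satisfies, for every measurable set S and all neighboring D, D': P(M(D) ∈ S) ≤ e^{ε}·P(M(D') ∈ S). -/
open MeasureTheory Set Real

lemma integrable_exp_neg_mul_abs' {a : ℝ} (ha : 0 < a) :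
    Integrable (fun x : ℝ => Real.exp (-a * |x|)) := by
  have h1 : IntegrableOn (fun x : ℝ => Real.exp (-a * |x|)) (Ioi 0) := by
    refine (exp_neg_integrableOn_Ioi 0 ha).congr_fun ?_ measurableSet_Ioi
    intro x hx
    simp [abs_of_pos (mem_Ioi.mp hx)]
  have h1' : IntegrableOn (fun x : ℝ => Real.exp (-a * |x|)) (Ici 0) := by
    rwa [integrableOn_Ici_iff_integrableOn_Ioi]
  have h2 : IntegrableOn (fun x : ℝ => Real.exp (-a * |x|)) (Iic 0) := by
    rw [← Measure.map_neg_eq_self (volume : Measure ℝ)]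
    have m : MeasurableEmbedding fun x : ℝ => -x := (Homeomorph.neg ℝ).measurableEmbedding
    rw [m.integrableOn_map_iff]
    simp_rw [Function.comp_def, abs_neg, neg_preimage, neg_Iic, neg_zero]
    exact h1'
  have h3 := h2.union h1
  rw [Iic_union_Ioi] at h3
  rwa [← integrableOn_univ]

theorem stmt_15 {D : Type*} (Neigh : D → D → Prop) (f : D → ℝ)
    (Δ ε : ℝ) (hΔ : 0 < Δ) (hε : 0 < ε)
    (hsens : ∀ d d', Neigh d d' → |f d - f d'| ≤ Δ)
    (b : ℝ) (hb : b = Δ / ε)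
    (S : Set ℝ) (hS : MeasurableSet S)
    (d d' : D) (hn : Neigh d d') :
    (∫ x in S, (1 / (2 * b)) * Real.exp (-|x - f d| / b)) ≤
      Real.exp ε * ∫ x in S, (1 / (2 * b)) * Real.exp (-|x - f d'| / b) := by
  have hb0 : 0 < b := hb ▸ div_pos hΔ hε
  have hint : ∀ c : ℝ, Integrable (fun x : ℝ => (1 / (2 * b)) * Real.exp (-|x - c| / b)) := by
    intro c
    have := ((integrable_exp_neg_mul_abs' (a := 1 / b) (by positivity)).comp_sub_right c).const_mul
      (1 / (2 * b))
    refine this.congr ?_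
    refine Filter.Eventually.of_forall fun x => ?_
    simp only [neg_mul, neg_div]
    ring_nf
  have key : ∀ x : ℝ, (1 / (2 * b)) * Real.exp (-|x - f d| / b) ≤
      Real.exp ε * ((1 / (2 * b)) * Real.exp (-|x - f d'| / b)) := by
    intro x
    rw [mul_left_comm]
    refine mul_le_mul_of_nonneg_left ?_ (by positivity)
    rw [← Real.exp_add]
    refine Real.exp_le_exp.mpr ?_
    have h1 : |x - f d'| - |x - f d| ≤ Δ := by
      have := abs_sub_abs_le_abs_sub (x - f d') (x - f d)
      have h2 : |x - f d' - (x - f d)| = |f d - f d'| := by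
        rw [show x - f d' - (x - f d) = f d - f d' by ring]
      linarith [hsens d d' hn, h2 ▸ this]
    have hΔb : Δ / b = ε := by rw [hb]; field_simp
    have h2 : (|x - f d'| - |x - f d|) / b ≤ Δ / b := by gcongr
    rw [hΔb, sub_div] at h2
    rw [neg_div, neg_div]
    linarith
  calc (∫ x in S, (1 / (2 * b)) * Real.exp (-|x - f d| / b))
      ≤ ∫ x in S, Real.exp ε * ((1 / (2 * b)) * Real.exp (-|x - f d'| / b)) := by
        refine setIntegral_mono ((hint (f d)).integrableOn) (((hint (f d')).const_mul _).integrableOn) fun x => key x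
    _ = Real.exp ε * ∫ x in S, (1 / (2 * b)) * Real.exp (-|x - f d'| / b) := by
        rw [integral_const_mul]
end
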